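/- Let (Y_t)_{t≥0} satisfy E[Y_t Y_s] = σ² e^{−λ|t−s|} with σ² > 0, λ > 0 and let C > 0 with C ≠ λ. Define X_t = Y_t + C ∫_0^t e^{−(λ−C)(t−s)} Y_s ds. Then E[X_t²] = σ² (1 − (C/(λ−C))(e^{−2(λ−C)t} − 1)), which is strictly greater than σ² for t > 0 and increasing in t; moreover if C > λ then E[X_t²] → +∞ as t → ∞. -/

import Mathlib

open MeasureTheory Real intervalIntegral


lemma primitive_hasDerivAt {g : ℝ → ℝ} (hg : Continuous g) (b : ℝ) :
    HasDerivAt (fun u => ∫ x in (0:ℝ)..u, g x) (g b) b :=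
  intervalIntegral.integral_hasDerivAt_right (hg.intervalIntegrable _ _)
    (hg.stronglyMeasurable.stronglyMeasurableAtFilter) hg.continuousAt

lemma primitive_continuous {g : ℝ → ℝ} (hg : Continuous g) :
    Continuous (fun u => ∫ x in (0:ℝ)..u, g x) :=
  continuous_iff_continuousAt.2 fun b => (primitive_hasDerivAt hg b).continuousAt

lemma integral_exp_mul' (c A B : ℝ) (hc : c ≠ 0) :
    ∫ x in A..B, Real.exp (c*x) = (Real.exp (c*B) - Real.exp (c*A))/c := by
  rw [intervalIntegral.integral_comp_mul_left Real.exp hc, integral_exp]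
  simp [smul_eq_mul]; ring

lemma det_main (lam C : ℝ) (hC : 0 < C) (ha : lam - C ≠ 0) (t : ℝ) (ht : 0 ≤ t) :
    1 + 2*C * (∫ s in (0:ℝ)..t, Real.exp (-(lam-C)*(t-s)) * Real.exp (-lam*(t-s)))
      + C^2 * (∫ s in (0:ℝ)..t, Real.exp (-(lam-C)*(t-s)) *
          ∫ u in (0:ℝ)..t, Real.exp (-(lam-C)*(t-u)) * Real.exp (-lam*|s-u|))
    = 1 - C/(lam-C) * (Real.exp (-2*(lam-C)*t) - 1) := by
  set a := lam - C with ha_def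
  set B : ℝ → ℝ := fun x => ∫ u in (0:ℝ)..x, Real.exp ((a+lam)*u) with hB_def
  have cexp : ∀ c : ℝ, Continuous fun u : ℝ => Real.exp (c*u) :=
    fun c => (continuous_const.mul continuous_id).rexp
  have hBc : Continuous B := primitive_continuous (cexp _)
  have hBd : ∀ x, HasDerivAt B (Real.exp ((a+lam)*x)) x :=
    fun x => primitive_hasDerivAt (cexp _) x
  set W : ℝ → ℝ := fun x => ∫ u in (0:ℝ)..x, Real.exp (-C*u) * B u with hW_def
  have hWd : ∀ x, HasDerivAt W (Real.exp (-C*x) * B x) x :=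
    fun x => primitive_hasDerivAt ((cexp _).mul hBc) x
  set E2 : ℝ → ℝ := fun x => ∫ u in (0:ℝ)..x, Real.exp (2*a*u) with hE2_def
  have hE2d : ∀ x, HasDerivAt E2 (Real.exp (2*a*x)) x :=
    fun x => primitive_hasDerivAt (cexp (2*a)) x
  -- Step 1
  have step1 : (∫ s in (0:ℝ)..t, Real.exp (-a*(t-s)) * Real.exp (-lam*(t-s)))
      = Real.exp (-(a+lam)*t) * B t := by
    rw [hB_def]
    rw [← intervalIntegral.integral_const_mul]
    apply intervalIntegral.integral_congr
    intro s _
    simp only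
    rw [← Real.exp_add, ← Real.exp_add]
    exact congrArg Real.exp (by ring)
  -- Step 2
  have inner_eval : ∀ s, 0 ≤ s → s ≤ t →
      (∫ u in (0:ℝ)..t, Real.exp (-a*(t-u)) * Real.exp (-lam*|s-u|))
        = Real.exp (-a*t) * (Real.exp (-lam*s) * B s
            + Real.exp (lam*s) * ((Real.exp (-C*s) - Real.exp (-C*t))/C)) := by
    intro s hs hst
    have c1 : Continuous fun u : ℝ => Real.exp (-a*(t-u)) * Real.exp (-lam*|s-u|) :=
      ((continuous_const.mul (continuous_const.sub continuous_id)).rexp).mul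
        ((continuous_const.mul (continuous_const.sub continuous_id).abs).rexp)
    have i01 : IntervalIntegrable (fun u : ℝ => Real.exp (-a*(t-u)) * Real.exp (-lam*|s-u|))
        volume 0 s := c1.intervalIntegrable 0 s
    have ist : IntervalIntegrable (fun u : ℝ => Real.exp (-a*(t-u)) * Real.exp (-lam*|s-u|))
        volume s t := c1.intervalIntegrable s t
    have hsplit := intervalIntegral.integral_add_adjacent_intervals i01 ist
    rw [← hsplit]
    have part1 : (∫ u in (0:ℝ)..s, Real.exp (-a*(t-u)) * Real.exp (-lam*|s-u|))
        = Real.exp (-a*t) * Real.exp (-lam*s) * B s := by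
      rw [hB_def]
      simp only
      rw [mul_assoc, ← intervalIntegral.integral_const_mul, ← intervalIntegral.integral_const_mul]
      apply intervalIntegral.integral_congr
      intro u hu
      rw [Set.uIcc_of_le hs] at hu
      have h1 : |s - u| = s - u := abs_of_nonneg (by linarith [hu.2])
      simp only
      rw [h1, ← Real.exp_add, ← Real.exp_add, ← Real.exp_add]
      exact congrArg Real.exp (by ring)
    have part2 : (∫ u in s..t, Real.exp (-a*(t-u)) * Real.exp (-lam*|s-u|))
        = Real.exp (-a*t) * Real.exp (lam*s) * ((Real.exp (-C*s) - Real.exp (-C*t))/C) := by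
      have key : ∀ u ∈ Set.uIcc s t,
          Real.exp (-a*(t-u)) * Real.exp (-lam*|s-u|)
            = (Real.exp (-a*t) * Real.exp (lam*s)) * Real.exp (-C*u) := by
        intro u hu
        rw [Set.uIcc_of_le hst] at hu
        have h1 : |s - u| = u - s := by
          rw [abs_sub_comm]; exact abs_of_nonneg (by linarith [hu.1])
        rw [h1, ← Real.exp_add, ← Real.exp_add, ← Real.exp_add]
        refine congrArg Real.exp ?_
        rw [ha_def]; ring
      rw [intervalIntegral.integral_congr key, intervalIntegral.integral_const_mul,
        integral_exp_mul' (-C) s t (neg_ne_zero.mpr hC.ne')]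
      have hC0 : C ≠ 0 := hC.ne'
      field_simp [hC0]
      ring
    rw [part1, part2]; ring
  -- Step 3
  have step3 : (∫ s in (0:ℝ)..t, Real.exp (-a*(t-s)) *
        ∫ u in (0:ℝ)..t, Real.exp (-a*(t-u)) * Real.exp (-lam*|s-u|))
      = Real.exp (-2*a*t) * (W t + (1/C) * (E2 t - Real.exp (-C*t) * B t)) := by
    have hcongr : ∀ s ∈ Set.uIcc (0:ℝ) t,
        (fun s => Real.exp (-a*(t-s)) *
          ∫ u in (0:ℝ)..t, Real.exp (-a*(t-u)) * Real.exp (-lam*|s-u|)) s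
        = (fun s => Real.exp (-2*a*t) * (Real.exp (-C*s) * B s
            + (1/C) * (Real.exp (2*a*s) - Real.exp (-C*t) * Real.exp ((a+lam)*s)))) s := by
      intro s hs'
      rw [Set.uIcc_of_le ht] at hs'
      simp only
      rw [inner_eval s hs'.1 hs'.2]
      have e1 : Real.exp (-a*(t-s)) = Real.exp (a*s) / Real.exp (a*t) := by
        rw [← Real.exp_sub]; exact congrArg Real.exp (by ring)
      have e2 : Real.exp (-a*t) = 1 / Real.exp (a*t) := by
        rw [one_div, ← Real.exp_neg]; exact congrArg Real.exp (by ring)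
      have e3 : Real.exp (-lam*s) = 1 / (Real.exp (a*s) * Real.exp (C*s)) := by
        rw [← Real.exp_add, one_div, ← Real.exp_neg]
        exact congrArg Real.exp (by rw [ha_def]; ring)
      have e4 : Real.exp (lam*s) = Real.exp (a*s) * Real.exp (C*s) := by
        rw [← Real.exp_add]; exact congrArg Real.exp (by rw [ha_def]; ring)
      have e5 : Real.exp (-C*s) = 1 / Real.exp (C*s) := by
        rw [one_div, ← Real.exp_neg]; exact congrArg Real.exp (by ring)
      have e6 : Real.exp (-C*t) = 1 / Real.exp (C*t) := by
        rw [one_div, ← Real.exp_neg]; exact congrArg Real.exp (by ring)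
      have e7 : Real.exp (-2*a*t) = 1 / (Real.exp (a*t) * Real.exp (a*t)) := by
        rw [← Real.exp_add, one_div, ← Real.exp_neg]; exact congrArg Real.exp (by ring)
      have e8 : Real.exp (2*a*s) = Real.exp (a*s) * Real.exp (a*s) := by
        rw [← Real.exp_add]; exact congrArg Real.exp (by ring)
      have e9 : Real.exp ((a+lam)*s) = Real.exp (a*s) * (Real.exp (a*s) * Real.exp (C*s)) := by
        rw [← Real.exp_add, ← Real.exp_add]
        exact congrArg Real.exp (by rw [ha_def]; ring)
      rw [e1, e2, e3, e4, e5, e6, e7, e8, e9]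
      have p1 := Real.exp_ne_zero (a*s)
      have p2 := Real.exp_ne_zero (a*t)
      have p3 := Real.exp_ne_zero (C*s)
      have p4 := Real.exp_ne_zero (C*t)
      field_simp
    rw [intervalIntegral.integral_congr hcongr]
    rw [intervalIntegral.integral_const_mul]
    congr 1
    have i1 : IntervalIntegrable (fun s => Real.exp (-C*s) * B s) volume 0 t :=
      ((cexp _).mul hBc).intervalIntegrable 0 t
    have i3 : IntervalIntegrable (fun s => Real.exp (2*a*s)) volume 0 t :=
      (cexp _).intervalIntegrable 0 t
    have i4 : IntervalIntegrable (fun s => Real.exp (-C*t) * Real.exp ((a+lam)*s)) volume 0 t :=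
      (continuous_const.mul (cexp _)).intervalIntegrable 0 t
    have i2 : IntervalIntegrable
        (fun s => (1/C) * (Real.exp (2*a*s) - Real.exp (-C*t) * Real.exp ((a+lam)*s))) volume 0 t :=
      ((i3.sub i4).const_mul _)
    rw [intervalIntegral.integral_add i1 i2, intervalIntegral.integral_const_mul,
      intervalIntegral.integral_sub i3 i4, intervalIntegral.integral_const_mul]
  -- Step 4 : the ODE argument
  have key : ∀ x : ℝ, Real.exp (2*a*x) + C * (Real.exp (-C*x) * B x) + C^2 * W x + C * E2 x
      = (1 + C/a) * Real.exp (2*a*x) - C/a := by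
    set G : ℝ → ℝ := fun x =>
      Real.exp (2*a*x) + C * (Real.exp (-C*x) * B x) + C^2 * W x + C * E2 x
        - ((1 + C/a) * Real.exp (2*a*x) - C/a) with hG_def
    have hGd : ∀ x, HasDerivAt G 0 x := by
      intro x
      have d1 : HasDerivAt (fun x => Real.exp (2*a*x)) (Real.exp (2*a*x) * (2*a)) x := by
        have := ((hasDerivAt_id x).const_mul (2*a)).exp
        simpa [mul_comm] using this
      have d2 : HasDerivAt (fun x => Real.exp (-C*x)) (Real.exp (-C*x) * (-C)) x := by
        have := ((hasDerivAt_id x).const_mul (-C)).exp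
        simpa [mul_comm] using this
      have d3 : HasDerivAt (fun x => Real.exp (-C*x) * B x)
          (Real.exp (-C*x) * (-C) * B x + Real.exp (-C*x) * Real.exp ((a+lam)*x)) x :=
        d2.mul (hBd x)
      have dtot := ((((d1.add (d3.const_mul C)).add ((hWd x).const_mul (C^2))).add
        ((hE2d x).const_mul C)).sub ((d1.const_mul (1 + C/a)).sub_const (C/a)))
      have e10 : Real.exp (-C*x) * Real.exp ((a+lam)*x) = Real.exp (2*a*x) := by
        rw [← Real.exp_add]; exact congrArg Real.exp (by rw [ha_def]; ring)
      refine dtot.congr_deriv ?_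
      rw [e10]
      field_simp
      ring
    have hconst := is_const_of_deriv_eq_zero (fun x => (hGd x).differentiableAt)
      (fun x => (hGd x).deriv)
    have hG0 : G 0 = 0 := by
      have hB0 : B 0 = 0 := intervalIntegral.integral_same
      have hW0 : W 0 = 0 := intervalIntegral.integral_same
      have hE20 : E2 0 = 0 := intervalIntegral.integral_same
      simp [hG_def, hB0, hW0, hE20]
    intro x
    have := hconst x 0
    rw [hG0] at this
    have : G x = 0 := this
    rw [hG_def] at this
    linarith [this]
  -- Final assembly
  rw [step1, step3]
  have hk := key t
  have e1 : Real.exp (-(a+lam)*t) = 1 / (Real.exp (a*t) * (Real.exp (a*t) * Real.exp (C*t))) := by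
    rw [← Real.exp_add, ← Real.exp_add, one_div, ← Real.exp_neg]
    exact congrArg Real.exp (by rw [ha_def]; ring)
  have e2 : Real.exp (-2*a*t) = 1 / (Real.exp (a*t) * Real.exp (a*t)) := by
    rw [← Real.exp_add, one_div, ← Real.exp_neg]; exact congrArg Real.exp (by ring)
  have e3 : Real.exp (-C*t) = 1 / Real.exp (C*t) := by
    rw [one_div, ← Real.exp_neg]; exact congrArg Real.exp (by ring)
  have e4 : Real.exp (2*a*t) = Real.exp (a*t) * Real.exp (a*t) := by
    rw [← Real.exp_add]; exact congrArg Real.exp (by ring)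
  rw [e1, e2, e3]
  rw [e4, e3] at hk
  have p1 := Real.exp_ne_zero (a*t)
  have p2 := Real.exp_ne_zero (C*t)
  linear_combination (norm := skip) (1 / (Real.exp (a*t) * Real.exp (a*t))) * hk
  field_simp
  ring
  
lemma abs_mul_le_half (x y : ℝ) : |x * y| ≤ (x^2 + y^2)/2 := by
  rw [abs_mul]
  nlinarith [sq_nonneg (|x| - |y|), sq_abs x, sq_abs y, abs_nonneg x, abs_nonneg y]

lemma cs_integral {α : Type*} [MeasurableSpace α] (μ : Measure α) [IsFiniteMeasure μ]
    (f : α → ℝ) (hf : Integrable f μ) (hf2 : Integrable (fun x => f x ^ 2) μ) :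
    (∫ x, f x ∂μ)^2 ≤ (μ Set.univ).toReal * ∫ x, f x ^2 ∂μ := by
  set M := (μ Set.univ).toReal with hM_def
  have hM : 0 ≤ M := ENNReal.toReal_nonneg
  rcases eq_or_lt_of_le hM with h0 | hMpos
  · have hμ : μ = 0 := by
      have h1 : μ Set.univ = 0 := by
        have := measure_ne_top μ Set.univ
        simpa [hM_def, ENNReal.toReal_eq_zero_iff, this] using h0.symm
      exact Measure.measure_univ_eq_zero.mp h1
    simp [hμ]
  · set I := ∫ x, f x ∂μ with hI_def
    have key : 0 ≤ ∫ x, (f x - I/M)^2 ∂μ := integral_nonneg fun x => sq_nonneg _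
    have expand : ∫ x, (f x - I/M)^2 ∂μ
        = (∫ x, f x ^2 ∂μ) - 2*(I/M)*I + (I/M)^2 * M := by
      have h1 : (fun x => (f x - I/M)^2)
          = fun x => (f x ^2 - (2*(I/M))*f x) + (I/M)^2 := by
        funext x; ring
      have hint1 : Integrable (fun x => f x ^ 2 - 2 * (I/M) * f x) μ :=
        hf2.sub (hf.const_mul _)
      rw [h1]
      rw [integral_add hint1 (integrable_const _),
        integral_sub hf2 (hf.const_mul (2*(I/M))), MeasureTheory.integral_const_mul, MeasureTheory.integral_const]
      simp [smul_eq_mul, ← hM_def, ← hI_def]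
      rw [show μ.real Set.univ = M from rfl]
      ring
    rw [expand] at key
    have hMne : M ≠ 0 := hMpos.ne'
    have : 0 ≤ (∫ x, f x ^2 ∂μ) - I^2/M := by
      have : 2*(I/M)*I - (I/M)^2 * M = I^2/M := by field_simp; ring
      linarith [key, this]
    have h2 : I^2/M ≤ ∫ x, f x ^2 ∂μ := by linarith
    calc I^2 = (I^2/M)*M := by field_simp
    _ ≤ (∫ x, f x ^2 ∂μ) * M := by nlinarith [h2, hMpos]
    _ = M * ∫ x, f x ^2 ∂μ := mul_comm _ _


/-- If `E[Y_t Y_s] = σ² e^{−λ|t−s|}`, `C > 0`, `C ≠ λ`, and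
`X_t = Y_t + C ∫_0^t e^{−(λ−C)(t−s)} Y_s ds`, then
`E[X_t²] = σ²(1 − (C/(λ−C))(e^{−2(λ−C)t} − 1))`, which is `> σ²` for `t > 0`, increasing,
and tends to `+∞` if `C > λ`. -/
theorem stmt8 {Ω : Type*} [MeasurableSpace Ω] (P : Measure Ω) [IsProbabilityMeasure P]
    (σ2 lam C : ℝ) (hσ : 0 < σ2) (hlam : 0 < lam) (hC : 0 < C) (hCl : C ≠ lam)
    (Y : ℝ → Ω → ℝ) (hmeas : Measurable (Function.uncurry Y))
    (hpath : ∀ ω, Continuous fun t => Y t ω)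
    (hsq : ∀ t : ℝ, 0 ≤ t → Integrable (fun ω => (Y t ω) ^ 2) P)
    (hcov : ∀ s t : ℝ, 0 ≤ s → 0 ≤ t →
      ∫ ω, Y t ω * Y s ω ∂P = σ2 * Real.exp (-lam * |t - s|))
    (X : ℝ → Ω → ℝ)
    (hX : ∀ t ω, X t ω
      = Y t ω + C * ∫ s in (0:ℝ)..t, Real.exp (-(lam - C) * (t - s)) * Y s ω) :
    (∀ t : ℝ, 0 ≤ t →
      ∫ ω, (X t ω) ^ 2 ∂P
        = σ2 * (1 - C / (lam - C) * (Real.exp (-2 * (lam - C) * t) - 1))) ∧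
    (∀ t : ℝ, 0 < t → σ2 < ∫ ω, (X t ω) ^ 2 ∂P) ∧
    (∀ s t : ℝ, 0 ≤ s → s < t → ∫ ω, (X s ω) ^ 2 ∂P < ∫ ω, (X t ω) ^ 2 ∂P) ∧
    (lam < C → Filter.Tendsto (fun t => ∫ ω, (X t ω) ^ 2 ∂P) Filter.atTop Filter.atTop) := by
  have ha : lam - C ≠ 0 := sub_ne_zero_of_ne hCl.symm
  have hYm : ∀ s, Measurable (Y s) := fun s => hmeas.comp measurable_prodMk_left
  have hvar : ∀ s : ℝ, 0 ≤ s → ∫ ω, Y s ω ^ 2 ∂P = σ2 := by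
    intro s hs
    have h := hcov s s hs hs
    simpa [pow_two] using h
  -- MAIN FORMULA
  have main : ∀ t : ℝ, 0 ≤ t → ∫ ω, (X t ω) ^ 2 ∂P
      = σ2 * (1 - C / (lam - C) * (Real.exp (-2 * (lam - C) * t) - 1)) := by
    intro t ht
    set k : ℝ → ℝ := fun s => Real.exp (-(lam - C) * (t - s)) with hk_def
    have hkc : Continuous k :=
      (continuous_const.mul (continuous_const.sub continuous_id)).rexp
    set ν : Measure ℝ := volume.restrict (Set.Ioc 0 t) with hν_def
    haveI hνfin : IsFiniteMeasure ν := by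
      constructor
      rw [hν_def, Measure.restrict_apply_univ]
      exact (Real.volume_Ioc (a := 0) (b := t)) ▸ ENNReal.ofReal_lt_top
    obtain ⟨K, hK⟩ := (isCompact_Icc (a := (0:ℝ)) (b := t)).exists_bound_of_continuousOn
      hkc.continuousOn
    have hK0 : 0 ≤ K := le_trans (norm_nonneg (k 0)) (hK 0 (Set.left_mem_Icc.mpr ht))
    set I : Ω → ℝ := fun ω => ∫ s in Set.Ioc (0:ℝ) t, k s * Y s ω with hI_def
    have hIm : StronglyMeasurable I := by
      rw [hI_def]
      exact MeasureTheory.StronglyMeasurable.integral_prod_right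
        (((hkc.measurable.comp measurable_snd).mul
          (hmeas.comp measurable_swap)).stronglyMeasurable)
    -- a.e. membership of the second coordinate
    have hae2 : ∀ᵐ p : Ω × ℝ ∂(P.prod ν), p.2 ∈ Set.Ioc (0:ℝ) t := by
      rw [MeasureTheory.ae_iff]
      have hset : {p : Ω × ℝ | ¬ p.2 ∈ Set.Ioc (0:ℝ) t}
          = (Set.univ : Set Ω) ×ˢ ((Set.Ioc (0:ℝ) t)ᶜ) := by
        ext p; simp
      rw [hset, MeasureTheory.Measure.prod_prod]
      have : ν ((Set.Ioc (0:ℝ) t)ᶜ) = 0 := by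
        rw [hν_def, Measure.restrict_apply (measurableSet_Ioc.compl)]
        simp
      rw [this, mul_zero]
    -- product integrability of Y² over Ω × [0,t]
    have hYsqprod : Integrable (fun p : Ω × ℝ => Y p.2 p.1 ^ 2) (P.prod ν) := by
      have hswap : Integrable (fun q : ℝ × Ω => Y q.1 q.2 ^ 2) (ν.prod P) := by
        refine (MeasureTheory.integrable_prod_iff ?_).mpr ⟨?_, ?_⟩
        · exact (hmeas.pow_const 2).aestronglyMeasurable
        · filter_upwards [ae_restrict_mem measurableSet_Ioc] with s hs
          exact hsq s hs.1.le
        · apply (integrable_const σ2).congr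
          filter_upwards [ae_restrict_mem measurableSet_Ioc] with s hs
          have h1 : (fun ω => ‖Y s ω ^ 2‖) = fun ω => Y s ω ^ 2 :=
            funext fun ω => by rw [Real.norm_eq_abs, abs_of_nonneg (sq_nonneg _)]
          rw [h1, hvar s hs.1.le]
      exact hswap.swap
    -- the swap (Fubini) workhorse
    have swap_core : ∀ g : Ω → ℝ, Measurable g → Integrable (fun ω => g ω ^ 2) P →
        (∫ ω, g ω * I ω ∂P)
          = ∫ s in Set.Ioc (0:ℝ) t, k s * ∫ ω, g ω * Y s ω ∂P := by
      intro g hgm hg2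
      have hprod : Integrable (fun p : Ω × ℝ => g p.1 * (k p.2 * Y p.2 p.1)) (P.prod ν) := by
        have hmeasp : AEStronglyMeasurable (fun p : Ω × ℝ => g p.1 * (k p.2 * Y p.2 p.1))
            (P.prod ν) :=
          ((hgm.comp measurable_fst).mul ((hkc.measurable.comp measurable_snd).mul
            (hmeas.comp measurable_swap))).aestronglyMeasurable
        have hdom1 : Integrable (fun p : Ω × ℝ => g p.1 ^ 2) (P.prod ν) := by
          have h := hg2.mul_prod (integrable_const (1:ℝ) (μ := ν))
          simpa using h
        refine Integrable.mono' (((hdom1.add hYsqprod).const_mul (K/2))) hmeasp ?_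
        filter_upwards [hae2] with p hp
        have b1 : |k p.2| ≤ K := by
          have := hK p.2 (Set.Ioc_subset_Icc_self hp)
          simpa [Real.norm_eq_abs] using this
        have b2 := abs_mul_le_half (g p.1) (Y p.2 p.1)
        have habs : |g p.1 * (k p.2 * Y p.2 p.1)| = |k p.2| * |g p.1 * Y p.2 p.1| := by
          rw [abs_mul, abs_mul, abs_mul]; ring
        rw [Real.norm_eq_abs, habs]
        have hb : |k p.2| * |g p.1 * Y p.2 p.1| ≤ K * ((g p.1 ^ 2 + Y p.2 p.1 ^ 2)/2) :=
          mul_le_mul b1 b2 (abs_nonneg _) hK0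
        calc |k p.2| * |g p.1 * Y p.2 p.1| ≤ K * ((g p.1 ^ 2 + Y p.2 p.1 ^ 2)/2) := hb
        _ = K/2 * (g p.1 ^ 2 + Y p.2 p.1 ^ 2) := by ring
      calc ∫ ω, g ω * I ω ∂P
          = ∫ ω, (∫ s in Set.Ioc (0:ℝ) t, g ω * (k s * Y s ω)) ∂P := by
            apply MeasureTheory.integral_congr_ae
            filter_upwards with ω
            rw [hI_def]
            exact (MeasureTheory.integral_const_mul _ _).symm
        _ = ∫ s in Set.Ioc (0:ℝ) t, ∫ ω, g ω * (k s * Y s ω) ∂P :=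
            MeasureTheory.integral_integral_swap hprod
        _ = ∫ s in Set.Ioc (0:ℝ) t, k s * ∫ ω, g ω * Y s ω ∂P := by
            apply MeasureTheory.integral_congr_ae
            filter_upwards with s
            rw [show (fun ω => g ω * (k s * Y s ω)) = fun ω => k s * (g ω * Y s ω) from
              funext fun ω => by ring]
            exact MeasureTheory.integral_const_mul _ _
    -- covariance consequence
    have hEYI : ∀ s0 : ℝ, 0 ≤ s0 → ∫ ω, Y s0 ω * I ω ∂P
        = ∫ s in Set.Ioc (0:ℝ) t, k s * (σ2 * Real.exp (-lam * |s0 - s|)) := by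
      intro s0 hs0
      rw [swap_core (Y s0) (hYm s0) (hsq s0 hs0)]
      apply MeasureTheory.setIntegral_congr_fun measurableSet_Ioc
      intro s hs
      dsimp only
      rw [hcov s s0 hs.1.le hs0]
    -- integrability of I²
    have hIntY2 : Integrable (fun ω => ∫ s in Set.Ioc (0:ℝ) t, Y s ω ^ 2) P := by
      have := hYsqprod.integral_prod_left
      exact this
    have hIb : ∀ ω, I ω ^ 2 ≤ K^2 * ((ν Set.univ).toReal * ∫ s in Set.Ioc (0:ℝ) t, Y s ω ^ 2) := by
      intro ω
      have hcY : Continuous fun s => Y s ω := hpath ω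
      have hint1 : IntegrableOn (fun s => |Y s ω|) (Set.Ioc 0 t) volume :=
        hcY.abs.integrableOn_Ioc
      have hint2 : IntegrableOn (fun s => |Y s ω| ^ 2) (Set.Ioc 0 t) volume := by
        apply Integrable.congr (hcY.pow 2).integrableOn_Ioc
        filter_upwards with s
        rw [sq_abs]
        rfl
      have h1 : |I ω| ≤ ∫ s in Set.Ioc (0:ℝ) t, K * |Y s ω| := by
        calc |I ω| ≤ ∫ s in Set.Ioc (0:ℝ) t, ‖k s * Y s ω‖ := by
              rw [hI_def, ← Real.norm_eq_abs]
              exact MeasureTheory.norm_integral_le_integral_norm _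
        _ ≤ ∫ s in Set.Ioc (0:ℝ) t, K * |Y s ω| := by
              apply MeasureTheory.setIntegral_mono_on
              · exact ((hkc.mul hcY).norm).integrableOn_Ioc
              · exact hint1.const_mul K
              · exact measurableSet_Ioc
              · intro s hs
                rw [Real.norm_eq_abs, abs_mul]
                apply mul_le_mul_of_nonneg_right _ (abs_nonneg _)
                have := hK s (Set.Ioc_subset_Icc_self hs)
                simpa [Real.norm_eq_abs] using this
      have h1' : |I ω| ≤ K * ∫ s in Set.Ioc (0:ℝ) t, |Y s ω| := by
        rw [← MeasureTheory.integral_const_mul]; exact h1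
      have cs := cs_integral ν (fun s => |Y s ω|) hint1 hint2
      have habs0 : 0 ≤ ∫ s in Set.Ioc (0:ℝ) t, |Y s ω| :=
        MeasureTheory.integral_nonneg fun s => abs_nonneg _
      have h2 : I ω ^ 2 ≤ (K * ∫ s in Set.Ioc (0:ℝ) t, |Y s ω|) ^ 2 := by
        rw [← sq_abs (I ω)]
        exact pow_le_pow_left₀ (abs_nonneg _) h1' 2
      have h3 : (K * ∫ s in Set.Ioc (0:ℝ) t, |Y s ω|) ^ 2
          = K^2 * (∫ s in Set.Ioc (0:ℝ) t, |Y s ω|) ^ 2 := by ring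
      have h4 : (∫ s in Set.Ioc (0:ℝ) t, |Y s ω|) ^ 2
          ≤ (ν Set.univ).toReal * ∫ s in Set.Ioc (0:ℝ) t, |Y s ω| ^ 2 := cs
      have h5 : (∫ s in Set.Ioc (0:ℝ) t, |Y s ω| ^ 2) = ∫ s in Set.Ioc (0:ℝ) t, Y s ω ^ 2 := by
        apply MeasureTheory.integral_congr_ae
        filter_upwards with s
        rw [sq_abs]
      calc I ω ^ 2 ≤ (K * ∫ s in Set.Ioc (0:ℝ) t, |Y s ω|) ^ 2 := h2
      _ = K^2 * (∫ s in Set.Ioc (0:ℝ) t, |Y s ω|) ^ 2 := h3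
      _ ≤ K^2 * ((ν Set.univ).toReal * ∫ s in Set.Ioc (0:ℝ) t, |Y s ω| ^ 2) :=
          mul_le_mul_of_nonneg_left h4 (sq_nonneg K)
      _ = K^2 * ((ν Set.univ).toReal * ∫ s in Set.Ioc (0:ℝ) t, Y s ω ^ 2) := by rw [h5]
    have hIsq : Integrable (fun ω => I ω ^ 2) P := by
      refine Integrable.mono' ((hIntY2.const_mul ((ν Set.univ).toReal)).const_mul (K^2))
        ((hIm.pow 2).aestronglyMeasurable) ?_
      filter_upwards with ω
      rw [Real.norm_eq_abs, abs_of_nonneg (sq_nonneg _)]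
      exact hIb ω
    -- E[I·I]
    have hEII : ∫ ω, I ω ^ 2 ∂P
        = ∫ s in Set.Ioc (0:ℝ) t, k s *
            ∫ u in Set.Ioc (0:ℝ) t, k u * (σ2 * Real.exp (-lam * |s - u|)) := by
      calc ∫ ω, I ω ^ 2 ∂P = ∫ ω, I ω * I ω ∂P := by
            apply MeasureTheory.integral_congr_ae
            filter_upwards with ω
            rw [pow_two]
        _ = ∫ s in Set.Ioc (0:ℝ) t, k s * ∫ ω, I ω * Y s ω ∂P :=
            swap_core I hIm.measurable hIsq
        _ = ∫ s in Set.Ioc (0:ℝ) t, k s *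
              ∫ u in Set.Ioc (0:ℝ) t, k u * (σ2 * Real.exp (-lam * |s - u|)) := by
            apply MeasureTheory.setIntegral_congr_fun measurableSet_Ioc
            intro s hs
            dsimp only
            have hcomm : ∫ ω, I ω * Y s ω ∂P = ∫ ω, Y s ω * I ω ∂P := by
              apply MeasureTheory.integral_congr_ae
              filter_upwards with ω
              ring
            rw [hcomm, hEYI s hs.1.le]
    -- assembly
    have hXI : ∀ ω, X t ω = Y t ω + C * I ω := by
      intro ω
      rw [hX t ω]
      congr 1
      congr 1
      rw [intervalIntegral.integral_of_le ht]
    have hmulYI : Integrable (fun ω => Y t ω * I ω) P := by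
      refine Integrable.mono' (((hsq t ht).add hIsq).div_const 2)
        ((hYm t).aestronglyMeasurable.mul hIm.aestronglyMeasurable) ?_
      filter_upwards with ω
      rw [Real.norm_eq_abs]
      exact abs_mul_le_half _ _
    have hexp : ∫ ω, X t ω ^ 2 ∂P = (∫ ω, Y t ω ^ 2 ∂P)
        + ((2*C) * ∫ ω, Y t ω * I ω ∂P + C^2 * ∫ ω, I ω ^ 2 ∂P) := by
      rw [show (fun ω => X t ω ^ 2)
          = fun ω => Y t ω ^ 2 + ((2*C) * (Y t ω * I ω) + C^2 * I ω ^ 2) from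
        funext fun ω => by rw [hXI ω]; ring]
      have ia : Integrable (fun ω => (2*C) * (Y t ω * I ω)) P := hmulYI.const_mul _
      have ib : Integrable (fun ω => C^2 * I ω ^ 2) P := hIsq.const_mul _
      have iab : Integrable (fun ω => (2*C) * (Y t ω * I ω) + C^2 * I ω ^ 2) P := ia.add ib
      rw [MeasureTheory.integral_add (hsq t ht) iab, MeasureTheory.integral_add ia ib,
        MeasureTheory.integral_const_mul, MeasureTheory.integral_const_mul]
    rw [hexp, hvar t ht, hEYI t ht, hEII]
    have pull1 : (∫ s in Set.Ioc (0:ℝ) t, k s * (σ2 * Real.exp (-lam * |t - s|)))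
        = σ2 * ∫ s in (0:ℝ)..t, k s * Real.exp (-lam * (t - s)) := by
      rw [intervalIntegral.integral_of_le ht, ← MeasureTheory.integral_const_mul]
      apply MeasureTheory.setIntegral_congr_fun measurableSet_Ioc
      intro s hs
      dsimp only
      rw [abs_of_nonneg (by linarith [hs.2] : (0:ℝ) ≤ t - s)]
      ring
    have pullinner : ∀ s : ℝ,
        (∫ u in Set.Ioc (0:ℝ) t, k u * (σ2 * Real.exp (-lam * |s - u|)))
          = σ2 * ∫ u in (0:ℝ)..t, k u * Real.exp (-lam * |s - u|) := by
      intro s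
      rw [intervalIntegral.integral_of_le ht, ← MeasureTheory.integral_const_mul]
      apply MeasureTheory.setIntegral_congr_fun measurableSet_Ioc
      intro u hu
      dsimp only
      ring
    have pull2 : (∫ s in Set.Ioc (0:ℝ) t, k s *
          ∫ u in Set.Ioc (0:ℝ) t, k u * (σ2 * Real.exp (-lam * |s - u|)))
        = σ2 * ∫ s in (0:ℝ)..t, k s * ∫ u in (0:ℝ)..t, k u * Real.exp (-lam * |s - u|) := by
      rw [intervalIntegral.integral_of_le ht, ← MeasureTheory.integral_const_mul]
      apply MeasureTheory.setIntegral_congr_fun measurableSet_Ioc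
      intro s hs
      dsimp only
      rw [pullinner s]
      ring
    rw [pull1, pull2]
    have hdet := det_main lam C hC ha t ht
    simp only [hk_def]
    linear_combination σ2 * hdet
  -- remaining parts
  set F : ℝ → ℝ := fun x => σ2 * (1 - C/(lam - C) * (Real.exp (-2*(lam - C)*x) - 1)) with hF_def
  have hFd : ∀ x, HasDerivAt F (2*C*σ2 * Real.exp (-2*(lam - C)*x)) x := by
    intro x
    have h0 : HasDerivAt (fun x : ℝ => -2*(lam - C)*x) (-2*(lam - C)) x := by
      simpa using (hasDerivAt_id x).const_mul (-2*(lam - C))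
    have h1 := h0.exp
    have h2 := (((h1.sub_const 1).const_mul (C/(lam - C))).const_sub 1).const_mul σ2
    refine h2.congr_deriv ?_
    field_simp
  have hFpos : ∀ x, 0 < 2*C*σ2 * Real.exp (-2*(lam - C)*x) := fun x => by positivity
  have hFmono : StrictMono F := strictMono_of_hasDerivAt_pos hFd hFpos
  have hF0 : F 0 = σ2 := by simp [hF_def]
  refine ⟨main, ?_, ?_, ?_⟩
  · intro t ht
    rw [main t ht.le]
    calc σ2 = F 0 := hF0.symm
    _ < F t := hFmono ht
  · intro s t hs hst
    rw [main s hs, main t (hs.trans hst.le)]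
    exact hFmono hst
  · intro hlc
    have hb : (0:ℝ) < -2*(lam - C) := by linarith
    have h1 : Filter.Tendsto (fun x : ℝ => -2*(lam - C)*x) Filter.atTop Filter.atTop :=
      Filter.tendsto_id.const_mul_atTop hb
    have h2 : Filter.Tendsto (fun x : ℝ => Real.exp (-2*(lam - C)*x)) Filter.atTop Filter.atTop :=
      Real.tendsto_exp_atTop.comp h1
    have hlc' : lam - C < 0 := by linarith
    have hcoef : 0 < σ2 * (-(C/(lam - C))) := by
      have h4 : C/(lam - C) < 0 := div_neg_of_pos_of_neg hC hlc'
      have h5 : 0 < -(C/(lam - C)) := by linarith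
      exact mul_pos hσ h5
    have h3 : Filter.Tendsto F Filter.atTop Filter.atTop := by
      have hFeq : F = fun x => (σ2 * (-(C/(lam - C)))) * Real.exp (-2*(lam - C)*x)
          + σ2*(1 + C/(lam - C)) := funext fun x => by rw [hF_def]; ring
      rw [hFeq]
      exact Filter.tendsto_atTop_add_const_right _ _ (h2.const_mul_atTop hcoef)
    apply h3.congr'
    filter_upwards [Filter.eventually_ge_atTop 0] with x hx
    exact (main x hx).symm
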